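/- There is a function F : SimpleGraph ℕ → SimpleGraph ℕ such that (i) for every graph G on ℕ, F G is symmetrically indivisible, and (ii) for all graphs G, H on ℕ, if F G is isomorphic to F H then G is isomorphic to H. In particular there are 2^ℵ0 pairwise non-isomorphic symmetrically indivisible countable graphs. -/

import Mathlib

def IsSymmetricGraphEmb {α β : Type*} {G : SimpleGraph α} {H : SimpleGraph β}
    (e : G ↪g H) : Prop :=
  ∀ g : G ≃g G, ∃ g' : H ≃g H, ∀ x, g' (e x) = e (g x)

def SymIndivGraph {α : Type*} (G : SimpleGraph α) : Prop :=
  ∀ c : α → Bool, ∃ e : G ↪g G, IsSymmetricGraphEmb e ∧ ∀ x y, c (e x) = c (e y)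

namespace SymIndivProof
open Classical
noncomputable section

/-! ### Vertex coding -/

def mkv (n i p : ℕ) : ℕ := Nat.pair (Nat.pair n i) p
def blk (v : ℕ) : ℕ := v.unpair.1
def pos (v : ℕ) : ℕ := v.unpair.2
def sz (v : ℕ) : ℕ := (blk v).unpair.1
def idx (v : ℕ) : ℕ := (blk v).unpair.2

@[simp] lemma blk_mkv (n i p : ℕ) : blk (mkv n i p) = Nat.pair n i := by
  simp [blk, mkv]
@[simp] lemma pos_mkv (n i p : ℕ) : pos (mkv n i p) = p := by simp [pos, mkv]
@[simp] lemma sz_mkv (n i p : ℕ) : sz (mkv n i p) = n := by simp [sz, blk, mkv]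
@[simp] lemma idx_mkv (n i p : ℕ) : idx (mkv n i p) = i := by simp [idx, blk, mkv]

lemma mkv_eta (v : ℕ) : mkv (sz v) (idx v) (pos v) = v := by
  simp [mkv, sz, idx, blk, pos]

lemma pair_sz_idx (v : ℕ) : Nat.pair (sz v) (idx v) = blk v := by
  simp [sz, idx, blk]

lemma mkv_left_inj {n i n' i' : ℕ} {p p' : ℕ} (h : mkv n i p = mkv n' i' p') :
    n = n' ∧ i = i' ∧ p = p' := by
  have h1 := congrArg blk h
  have h2 := congrArg pos h
  simp only [blk_mkv, pos_mkv] at h1 h2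
  have h3 := congrArg (fun x => x.unpair.1) h1
  have h4 := congrArg (fun x => x.unpair.2) h1
  simp at h3 h4
  exact ⟨h3, h4, h2⟩

lemma mkv_inj_p {n i : ℕ} : Function.Injective (fun p => mkv n i p) := by
  intro a b h; exact (mkv_left_inj h).2.2

lemma sz_eq_of_blk_eq {u v : ℕ} (h : blk u = blk v) : sz u = sz v := by
  simp [sz, h]

lemma idx_eq_of_blk_eq {u v : ℕ} (h : blk u = blk v) : idx u = idx v := by
  simp [idx, h]

/-! ### The clique-union graph -/

def Real2 (S : Set ℕ) (v : ℕ) : Prop := sz v ∈ S ∧ pos v < sz v ∧ 2 ≤ sz v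

def CG (S : Set ℕ) : SimpleGraph ℕ where
  Adj u v := u ≠ v ∧ blk u = blk v ∧ Real2 S u ∧ Real2 S v
  symm := by
    refine ⟨?_⟩
    rintro u v ⟨h1, h2, h3, h4⟩
    exact ⟨fun h => h1 h.symm, h2.symm, h4, h3⟩
  loopless := ⟨fun v h => h.1 rfl⟩

lemma CG_adj {S : Set ℕ} {u v : ℕ} :
    (CG S).Adj u v ↔ u ≠ v ∧ blk u = blk v ∧ Real2 S u ∧ Real2 S v := Iff.rfl

lemma nbhd_of_real {S : Set ℕ} {v : ℕ} (hv : Real2 S v) :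
    (CG S).neighborSet v =
      (fun p => mkv (sz v) (idx v) p) '' {p | p < sz v ∧ p ≠ pos v} := by
  ext u
  simp only [SimpleGraph.mem_neighborSet, CG_adj, Set.mem_image, Set.mem_setOf_eq]
  constructor
  · rintro ⟨hne, hblk, _, hu⟩
    have hblk' : blk u = blk v := hblk.symm
    refine ⟨pos u, ⟨?_, ?_⟩, ?_⟩
    · exact (sz_eq_of_blk_eq hblk') ▸ hu.2.1
    · intro hp
      apply hne
      have : mkv (sz v) (idx v) (pos v) = mkv (sz u) (idx u) (pos u) := by
        simp [sz, idx, hblk, hp]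
      rw [mkv_eta, mkv_eta] at this; exact this
    · calc mkv (sz v) (idx v) (pos u) = mkv (sz u) (idx u) (pos u) := by
            simp [sz, idx, hblk']
        _ = u := mkv_eta u
  · rintro ⟨p, ⟨hp, hpne⟩, rfl⟩
    have hblkv : Nat.pair (sz v) (idx v) = blk v := pair_sz_idx v
    refine ⟨?_, ?_, hv, ?_⟩
    · intro h
      have := congrArg pos h
      simp at this; exact hpne this.symm
    · rw [blk_mkv, hblkv]
    · exact ⟨by simpa using hv.1, by simpa using hp, by simpa using hv.2.2⟩

lemma nbhd_of_not_real {S : Set ℕ} {v : ℕ} (hv : ¬ Real2 S v) :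
    (CG S).neighborSet v = ∅ := by
  ext u
  simp only [SimpleGraph.mem_neighborSet, CG_adj, Set.mem_empty_iff_false, iff_false]
  rintro ⟨_, _, hv', _⟩
  exact hv hv'

lemma ncard_nbhd_of_real {S : Set ℕ} {v : ℕ} (hv : Real2 S v) :
    ((CG S).neighborSet v).ncard = sz v - 1 := by
  rw [nbhd_of_real hv, Set.ncard_image_of_injective _ mkv_inj_p]
  have : {p | p < sz v ∧ p ≠ pos v} = ↑((Finset.range (sz v)).erase (pos v)) := by
    ext p; simp [and_comm]
  rw [this, Set.ncard_coe_finset, Finset.card_erase_of_mem (by simp [hv.2.1]),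
    Finset.card_range]

lemma mem_S_iff_ncard {S : Set ℕ} {m : ℕ} (hm : 2 ≤ m) :
    m ∈ S ↔ ∃ v, ((CG S).neighborSet v).ncard = m - 1 := by
  constructor
  · intro hmS
    refine ⟨mkv m 0 0, ?_⟩
    have hr : Real2 S (mkv m 0 0) :=
      ⟨by simpa using hmS, by simpa using by omega, by simpa using hm⟩
    rw [ncard_nbhd_of_real hr]; simp
  · rintro ⟨v, hv⟩
    by_cases hr : Real2 S v
    · rw [ncard_nbhd_of_real hr] at hv
      have h2 := hr.2.2
      have : sz v = m := by omega
      rw [← this]; exact hr.1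
    · rw [nbhd_of_not_real hr] at hv
      simp at hv; omega

/-! ### Encoding a graph as a set of sizes -/

def SS (G : SimpleGraph ℕ) : Set ℕ :=
  {m | m % 2 = 1} ∪ {m | ∃ i j, G.Adj i j ∧ m = 2 * Nat.pair i j + 4}

lemma odd_mem_SS {G : SimpleGraph ℕ} {m : ℕ} (h : m % 2 = 1) : m ∈ SS G := Or.inl h

lemma code_mem_SS_iff {G : SimpleGraph ℕ} {i j : ℕ} :
    (2 * Nat.pair i j + 4 ∈ SS G) ↔ G.Adj i j := by
  constructor
  · rintro (h | ⟨i', j', hadj, hc⟩)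
    · simp only [Set.mem_setOf_eq] at h; omega
    · have hp : Nat.pair i' j' = Nat.pair i j := by omega
      obtain ⟨rfl, rfl⟩ := Nat.pair_eq_pair.mp hp
      exact hadj
  · intro h; exact Or.inr ⟨i, j, h, rfl⟩

lemma ncard_nbhd_iso {α β : Type*} {G : SimpleGraph α} {G' : SimpleGraph β}
    (φ : G ≃g G') (v : α) :
    (G'.neighborSet (φ v)).ncard = (G.neighborSet v).ncard := by
  rw [← Nat.card_coe_set_eq, ← Nat.card_coe_set_eq]
  exact (Nat.card_congr (φ.mapNeighborSet v)).symm

lemma SS_eq_of_iso {G H : SimpleGraph ℕ} (φ : CG (SS G) ≃g CG (SS H)) :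
    SS G = SS H := by
  ext m
  by_cases hm : 2 ≤ m
  · rw [mem_S_iff_ncard hm, mem_S_iff_ncard hm]
    constructor
    · rintro ⟨v, hv⟩; exact ⟨φ v, by rw [ncard_nbhd_iso φ v]; exact hv⟩
    · rintro ⟨v, hv⟩; exact ⟨φ.symm v, by rw [ncard_nbhd_iso φ.symm v]; exact hv⟩
  · constructor
    · rintro (h | ⟨i, j, _, hc⟩)
      · exact Or.inl h
      · omega
    · rintro (h | ⟨i, j, _, hc⟩)
      · exact Or.inl h
      · omega

theorem part2 {G H : SimpleGraph ℕ} (h : Nonempty (CG (SS G) ≃g CG (SS H))) :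
    Nonempty (G ≃g H) := by
  obtain ⟨φ⟩ := h
  have hSS := SS_eq_of_iso φ
  have hGH : G = H := by
    ext i j
    rw [← code_mem_SS_iff (G := G), hSS, code_mem_SS_iff]
  subst hGH
  exact ⟨SimpleGraph.Iso.refl⟩

/-! ### Extension of embeddings to permutations -/

theorem exPerm {α β : Type*} [Fintype β] (f g : α ↪ β) :
    ∃ π : Equiv.Perm β, ∀ a, π (f a) = g a := by
  classical
  let e1 : α ≃ Set.range f := Equiv.ofInjective f f.injective
  let e2 : α ≃ Set.range g := Equiv.ofInjective g g.injective
  have hc : Fintype.card ↥(Set.range f)ᶜ = Fintype.card ↥(Set.range g)ᶜ := by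
    rw [Fintype.card_compl_set, Fintype.card_compl_set,
      Fintype.card_congr (e1.symm.trans e2)]
  obtain ⟨ec⟩ := Fintype.card_eq.mp hc
  refine ⟨(Equiv.Set.sumCompl (Set.range f)).symm.trans
    ((Equiv.sumCongr (e1.symm.trans e2) ec).trans (Equiv.Set.sumCompl (Set.range g))), ?_⟩
  intro a
  simp only [Equiv.trans_apply]
  rw [Equiv.Set.sumCompl_symm_apply_of_mem (Set.mem_range_self a)]
  simp only [Equiv.sumCongr_apply, Sum.map_inl, Equiv.trans_apply]
  have h1 : e1.symm ⟨f a, Set.mem_range_self a⟩ = a := by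
    apply e1.injective
    simp only [Equiv.apply_symm_apply]
    rfl
  rw [h1]
  rfl

/-! ### Pigeonhole -/

def cnt (c : ℕ → Bool) (b : Bool) (m j : ℕ) : ℕ :=
  ((Finset.range m).filter fun q => c (mkv m j q) = b).card

lemma cnt_add (c : ℕ → Bool) (m j : ℕ) :
    cnt c true m j + cnt c false m j = m := by
  classical
  have h := Finset.card_filter_add_card_filter_not (s := Finset.range m)
      (p := fun q => c (mkv m j q) = true)
  simpa [cnt] using h

lemma good_total (c : ℕ → Bool) : ∃ b : Bool, ∀ n K : ℕ, ∃ m, K ≤ m ∧ m % 2 = 1 ∧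
    {j | n ≤ cnt c b m j}.Infinite := by
  by_contra hcon
  push_neg at hcon
  obtain ⟨nt, Kt, ht⟩ := hcon true
  obtain ⟨nf, Kf, hf⟩ := hcon false
  set m := 2 * (nt + nf + Kt + Kf) + 1 with hm
  have h2 : {j | nt ≤ cnt c true m j} ∪ {j | nf ≤ cnt c false m j} = Set.univ := by
    ext j
    have := cnt_add c m j
    simp only [Set.mem_union, Set.mem_setOf_eq, Set.mem_univ, iff_true]
    omega
  have h3 : ({j | nt ≤ cnt c true m j} ∪ {j | nf ≤ cnt c false m j}).Finite := by
    apply Set.Finite.union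
    · exact (ht m (by omega) (by omega))
    · exact (hf m (by omega) (by omega))
  rw [h2] at h3
  exact Set.infinite_univ h3

lemma exists_bM (c : ℕ → Bool) : ∃ (b : Bool) (M : ℕ → ℕ), StrictMono M ∧
    ∀ n, 3 ≤ M n ∧ M n % 2 = 1 ∧ {j | n ≤ cnt c b (M n) j}.Infinite := by
  obtain ⟨b, hb⟩ := good_total c
  choose m h1 h2 h3 using hb
  refine ⟨b, fun n => Nat.rec (m 0 3) (fun k Mk => m (k + 1) (Mk + 3)) n, ?_, ?_⟩
  · apply strictMono_nat_of_lt_succ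
    intro n
    have := h1 (n + 1) ((Nat.rec (m 0 3) (fun k Mk => m (k + 1) (Mk + 3)) n) + 3)
    show (Nat.rec (m 0 3) (fun k Mk => m (k + 1) (Mk + 3)) n : ℕ) <
      m (n + 1) ((Nat.rec (m 0 3) (fun k Mk => m (k + 1) (Mk + 3)) n) + 3)
    omega
  · intro n
    induction n with
    | zero => exact ⟨le_trans (by norm_num) (h1 0 3), h2 0 3, h3 0 3⟩
    | succ k ih =>
      refine ⟨?_, h2 _ _, h3 _ _⟩
      have := h1 (k + 1) ((Nat.rec (m 0 3) (fun k Mk => m (k + 1) (Mk + 3)) k) + 3)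
      show 3 ≤ m (k + 1) ((Nat.rec (m 0 3) (fun k Mk => m (k + 1) (Mk + 3)) k) + 3)
      omega

/-! ### The context structure -/

structure Ctx where
  S : Set ℕ
  hS : ∀ m, m % 2 = 1 → m ∈ S
  c : ℕ → Bool
  b : Bool
  M : ℕ → ℕ
  hMmono : StrictMono M
  hM3 : ∀ n, 3 ≤ M n
  hModd : ∀ n, M n % 2 = 1
  hMinf : ∀ n, {j | n ≤ cnt c b (M n) j}.Infinite

namespace Ctx

variable (X : Ctx)

lemma MS (n : ℕ) : X.M n ∈ X.S := X.hS _ (X.hModd n)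

lemma M_inj : Function.Injective X.M := X.hMmono.injective

def hostI (n i : ℕ) : ℕ := ((X.hMinf n).natEmbedding _ i : ℕ)

lemma hostI_cnt (n i : ℕ) : n ≤ cnt X.c X.b (X.M n) (X.hostI n i) :=
  ((X.hMinf n).natEmbedding _ i).2

lemma hostI_inj (n : ℕ) : Function.Injective (X.hostI n) := by
  intro i i' h
  exact ((X.hMinf n).natEmbedding _).injective (Subtype.ext h)

def USet (n i : ℕ) : Finset ℕ :=
  (Finset.range (X.M n)).filter fun q => X.c (mkv (X.M n) (X.hostI n i) q) = X.b

lemma USet_card (n i : ℕ) : n ≤ (X.USet n i).card := X.hostI_cnt n i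

def sel (n i p : ℕ) : ℕ :=
  if hp : p < (X.USet n i).card then ((X.USet n i).orderIsoOfFin rfl ⟨p, hp⟩ : ℕ) else 0

lemma sel_mem {n i p : ℕ} (hp : p < (X.USet n i).card) :
    X.sel n i p ∈ X.USet n i := by
  rw [sel, dif_pos hp]
  exact ((X.USet n i).orderIsoOfFin rfl ⟨p, hp⟩).2

lemma sel_lt {n i p : ℕ} (hp : p < (X.USet n i).card) : X.sel n i p < X.M n := by
  have := X.sel_mem hp
  rw [USet, Finset.mem_filter, Finset.mem_range] at this
  exact this.1

lemma sel_color {n i p : ℕ} (hp : p < (X.USet n i).card) :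
    X.c (mkv (X.M n) (X.hostI n i) (X.sel n i p)) = X.b := by
  have := X.sel_mem hp
  rw [USet, Finset.mem_filter] at this
  exact this.2

lemma sel_inj {n i p p' : ℕ} (hp : p < (X.USet n i).card)
    (hp' : p' < (X.USet n i).card) (h : X.sel n i p = X.sel n i p') : p = p' := by
  rw [sel, dif_pos hp, sel, dif_pos hp'] at h
  have := ((X.USet n i).orderIsoOfFin rfl).injective (Subtype.ext h)
  exact congrArg Fin.val this

def uEmb (n i : ℕ) : Fin n ↪ Fin (X.M n) where
  toFun := fun p =>
    ⟨X.sel n i p, X.sel_lt (lt_of_lt_of_le p.2 (X.USet_card n i))⟩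
  inj' := by
    intro p q h
    apply Fin.ext
    exact X.sel_inj (lt_of_lt_of_le p.2 (X.USet_card n i))
      (lt_of_lt_of_le q.2 (X.USet_card n i)) (congrArg Fin.val h)

def NRset : Set ℕ := {v | ¬ Real2 X.S v}

lemma NRset_infinite : X.NRset.Infinite := by
  apply Set.infinite_of_injective_forall_mem (f := fun i => mkv 0 i 0)
    (hi := fun a b h => (mkv_left_inj h).2.1)
  intro i
  simp only [NRset, Set.mem_setOf_eq, Real2, sz_mkv]
  rintro ⟨-, -, h⟩; omega

def eNR : ↥X.NRset ≃ ℕ := by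
  haveI := X.NRset_infinite.to_subtype
  exact Classical.choice nonempty_equiv_of_countable

def hostBlk (n i : ℕ) : ℕ := Nat.pair (X.M n) (X.hostI n i)

lemma hostBlk_inj {n i n' i' : ℕ} (h : X.hostBlk n i = X.hostBlk n' i') :
    n = n' ∧ i = i' := by
  rw [hostBlk, hostBlk] at h
  obtain ⟨h1, h2⟩ := Nat.pair_eq_pair.mp h
  have hn : n = n' := X.M_inj h1
  subst hn
  exact ⟨rfl, X.hostI_inj n h2⟩

/-! ### The embedding -/

def emb (v : ℕ) : ℕ :=
  if hv : Real2 X.S v then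
    mkv (X.M (sz v)) (X.hostI (sz v) (idx v)) (X.sel (sz v) (idx v) (pos v))
  else
    mkv (X.M 1) (X.hostI 1 (X.eNR ⟨v, hv⟩)) (X.sel 1 (X.eNR ⟨v, hv⟩) 0)

lemma card_pos_real {v : ℕ} (hv : Real2 X.S v) :
    pos v < (X.USet (sz v) (idx v)).card :=
  lt_of_lt_of_le hv.2.1 (X.USet_card _ _)

lemma card_pos_one (k : ℕ) : 0 < (X.USet 1 k).card :=
  lt_of_lt_of_le one_pos (X.USet_card 1 k)

lemma emb_real {v : ℕ} (hv : Real2 X.S v) :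
    X.emb v = mkv (X.M (sz v)) (X.hostI (sz v) (idx v)) (X.sel (sz v) (idx v) (pos v)) :=
  dif_pos hv

lemma emb_notreal {v : ℕ} (hv : ¬ Real2 X.S v) :
    X.emb v = mkv (X.M 1) (X.hostI 1 (X.eNR ⟨v, hv⟩)) (X.sel 1 (X.eNR ⟨v, hv⟩) 0) :=
  dif_neg hv

lemma emb_color (v : ℕ) : X.c (X.emb v) = X.b := by
  by_cases hv : Real2 X.S v
  · rw [X.emb_real hv]
    exact X.sel_color (X.card_pos_real hv)
  · rw [X.emb_notreal hv]
    exact X.sel_color (X.card_pos_one _)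

lemma blk_emb_real {v : ℕ} (hv : Real2 X.S v) :
    blk (X.emb v) = X.hostBlk (sz v) (idx v) := by
  rw [X.emb_real hv, blk_mkv, hostBlk]

lemma blk_emb_notreal {v : ℕ} (hv : ¬ Real2 X.S v) :
    blk (X.emb v) = X.hostBlk 1 (X.eNR ⟨v, hv⟩) := by
  rw [X.emb_notreal hv, blk_mkv, hostBlk]

lemma emb_inj : Function.Injective X.emb := by
  intro u v h
  by_cases hu : Real2 X.S u <;> by_cases hv : Real2 X.S v
  · have hblk : X.hostBlk (sz u) (idx u) = X.hostBlk (sz v) (idx v) := by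
      rw [← X.blk_emb_real hu, ← X.blk_emb_real hv, h]
    obtain ⟨hsz, hidx⟩ := X.hostBlk_inj hblk
    have hpos : pos (X.emb u) = pos (X.emb v) := by rw [h]
    rw [X.emb_real hu, X.emb_real hv, pos_mkv, pos_mkv] at hpos
    rw [hsz, hidx] at hpos
    have := X.sel_inj (hsz ▸ hidx ▸ X.card_pos_real hu) (X.card_pos_real hv) hpos
    rw [← mkv_eta u, ← mkv_eta v, hsz, hidx, this]
  · have hblk : X.hostBlk (sz u) (idx u) = X.hostBlk 1 (X.eNR ⟨v, hv⟩) := by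
      rw [← X.blk_emb_real hu, ← X.blk_emb_notreal hv, h]
    have := (X.hostBlk_inj hblk).1
    exact absurd (this ▸ hu.2.2) (by omega)
  · have hblk : X.hostBlk 1 (X.eNR ⟨u, hu⟩) = X.hostBlk (sz v) (idx v) := by
      rw [← X.blk_emb_notreal hu, ← X.blk_emb_real hv, h]
    have := (X.hostBlk_inj hblk).1
    exact absurd (this ▸ hv.2.2) (by omega)
  · have hblk : X.hostBlk 1 (X.eNR ⟨u, hu⟩) = X.hostBlk 1 (X.eNR ⟨v, hv⟩) := by
      rw [← X.blk_emb_notreal hu, ← X.blk_emb_notreal hv, h]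
    have := (X.hostBlk_inj hblk).2
    have := X.eNR.injective (this : X.eNR ⟨u, hu⟩ = X.eNR ⟨v, hv⟩)
    exact congrArg Subtype.val this

lemma real_emb {v : ℕ} (hv : Real2 X.S v) : Real2 X.S (X.emb v) := by
  rw [X.emb_real hv]
  refine ⟨by simpa using X.MS (sz v), ?_, ?_⟩
  · simpa using X.sel_lt (X.card_pos_real hv)
  · simpa using le_trans (by norm_num) (X.hM3 (sz v))

lemma emb_adj {u v : ℕ} : (CG X.S).Adj (X.emb u) (X.emb v) ↔ (CG X.S).Adj u v := by
  constructor
  · rintro ⟨hne, hblk, hru, hrv⟩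
    have hne' : u ≠ v := fun h => hne (congrArg X.emb h)
    by_cases hu : Real2 X.S u <;> by_cases hv : Real2 X.S v
    · rw [X.blk_emb_real hu, X.blk_emb_real hv] at hblk
      obtain ⟨hsz, hidx⟩ := X.hostBlk_inj hblk
      refine ⟨hne', ?_, hu, hv⟩
      rw [← pair_sz_idx u, ← pair_sz_idx v, hsz, hidx]
    · rw [X.blk_emb_real hu, X.blk_emb_notreal hv] at hblk
      have := (X.hostBlk_inj hblk).1
      exact absurd (this ▸ hu.2.2) (by omega)
    · rw [X.blk_emb_notreal hu, X.blk_emb_real hv] at hblk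
      have := (X.hostBlk_inj hblk).1
      exact absurd (this ▸ hv.2.2) (by omega)
    · rw [X.blk_emb_notreal hu, X.blk_emb_notreal hv] at hblk
      have h1 := (X.hostBlk_inj hblk).2
      have h2 := X.eNR.injective (h1 : X.eNR ⟨u, hu⟩ = X.eNR ⟨v, hv⟩)
      exact absurd (congrArg Subtype.val h2) hne'
  · rintro ⟨hne, hblk, hu, hv⟩
    refine ⟨fun h => hne (X.emb_inj h), ?_, X.real_emb hu, X.real_emb hv⟩
    rw [X.blk_emb_real hu, X.blk_emb_real hv, sz_eq_of_blk_eq hblk,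
      idx_eq_of_blk_eq hblk]

def eEmbg : CG X.S ↪g CG X.S := ⟨⟨X.emb, X.emb_inj⟩, X.emb_adj⟩

end Ctx
end
end SymIndivProof
namespace SymIndivProof
noncomputable section
namespace Ctx
open Classical

variable (X : Ctx)

/-! ### Analysis of automorphisms of `CG S` -/

lemma real_iff_adj (v : ℕ) : Real2 X.S v ↔ ∃ u, (CG X.S).Adj v u := by
  constructor
  · intro hv
    refine ⟨mkv (sz v) (idx v) (if pos v = 0 then 1 else 0), ?_, ?_, hv, ?_⟩
    · intro h
      have h2 := congrArg pos h
      rw [pos_mkv] at h2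
      split_ifs at h2 with h0 <;> omega
    · rw [blk_mkv, pair_sz_idx]
    · refine ⟨by simpa using hv.1, ?_, by simpa using hv.2.2⟩
      rw [pos_mkv, sz_mkv]
      have := hv.2.2
      split_ifs <;> omega
  · rintro ⟨u, _, _, hv, _⟩
    exact hv

lemma real_g (g : CG X.S ≃g CG X.S) (v : ℕ) :
    Real2 X.S (g v) ↔ Real2 X.S v := by
  rw [X.real_iff_adj, X.real_iff_adj]
  constructor
  · rintro ⟨u, hu⟩
    refine ⟨g.symm u, ?_⟩
    rw [← g.apply_symm_apply u] at hu
    exact g.map_adj_iff.mp hu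
  · rintro ⟨u, hu⟩
    exact ⟨g u, g.map_adj_iff.mpr hu⟩

def compSet (v : ℕ) : Set ℕ := {u | u = v ∨ (CG X.S).Adj u v}

lemma comp_real {v : ℕ} (hv : Real2 X.S v) :
    X.compSet v = (fun p => mkv (sz v) (idx v) p) '' {p | p < sz v} := by
  ext u
  simp only [compSet, Set.mem_setOf_eq, Set.mem_image]
  constructor
  · rintro (rfl | ⟨hne, hblk, hu, -⟩)
    · exact ⟨pos u, hv.2.1, mkv_eta u⟩
    · refine ⟨pos u, ?_, ?_⟩
      · rw [← sz_eq_of_blk_eq hblk]; exact hu.2.1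
      · rw [← sz_eq_of_blk_eq hblk, ← idx_eq_of_blk_eq hblk, mkv_eta]
  · rintro ⟨p, hp, rfl⟩
    by_cases hpp : p = pos v
    · left; rw [hpp, mkv_eta]
    · right
      refine ⟨?_, ?_, ⟨by simpa using hv.1, by simpa using hp, by simpa using hv.2.2⟩, hv⟩
      · intro h
        have := congrArg pos h
        rw [pos_mkv] at this
        exact hpp this
      · rw [blk_mkv, pair_sz_idx]

lemma comp_ncard {v : ℕ} (hv : Real2 X.S v) : (X.compSet v).ncard = sz v := by
  rw [X.comp_real hv, Set.ncard_image_of_injective _ mkv_inj_p]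
  have : {p | p < sz v} = ↑(Finset.range (sz v)) := by ext; simp
  rw [this, Set.ncard_coe_finset, Finset.card_range]

lemma comp_g (g : CG X.S ≃g CG X.S) (v : ℕ) :
    (fun u => g u) '' X.compSet v = X.compSet (g v) := by
  ext u
  simp only [Set.mem_image, compSet, Set.mem_setOf_eq]
  constructor
  · rintro ⟨w, (rfl | hw), rfl⟩
    · left; rfl
    · right; exact g.map_adj_iff.mpr hw
  · intro hu
    refine ⟨g.symm u, ?_, g.apply_symm_apply u⟩
    rcases hu with rfl | hu
    · left; exact g.symm_apply_apply v
    · right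
      have : (CG X.S).Adj (g (g.symm u)) (g v) := by rwa [g.apply_symm_apply]
      exact g.map_adj_iff.mp this

lemma sz_g (g : CG X.S ≃g CG X.S) {v : ℕ} (hv : Real2 X.S v) :
    sz (g v) = sz v := by
  have h1 := X.comp_ncard ((X.real_g g v).mpr hv)
  have h2 : (X.compSet (g v)).ncard = (X.compSet v).ncard := by
    rw [← X.comp_g g v, Set.ncard_image_of_injective _ (fun a b h => g.injective h)]
  rw [X.comp_ncard hv] at h2
  rw [← h1, h2]

lemma blk_g_eq (g : CG X.S ≃g CG X.S) {u v : ℕ} (hblk : blk u = blk v)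
    (hu : Real2 X.S u) (hv : Real2 X.S v) : blk (g u) = blk (g v) := by
  rcases eq_or_ne u v with rfl | hne
  · rfl
  · have : (CG X.S).Adj u v := ⟨hne, hblk, hu, hv⟩
    exact (g.map_adj_iff.mpr this).2.1

lemma pos_g_lt (g : CG X.S ≃g CG X.S) {v : ℕ} (hv : Real2 X.S v) :
    pos (g v) < sz v := by
  have := ((X.real_g g v).mpr hv).2.1
  rwa [X.sz_g g hv] at this

def PiF (g : CG X.S ≃g CG X.S) (n i : ℕ) : ℕ := idx (g (mkv n i 0))

lemma real_mkv0 {n : ℕ} (i : ℕ) (hn : 2 ≤ n) (hnS : n ∈ X.S) :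
    Real2 X.S (mkv n i 0) := ⟨by simpa using hnS, by simpa using by omega, by simpa using hn⟩

lemma idx_g (g : CG X.S ≃g CG X.S) {v : ℕ} (hv : Real2 X.S v) :
    idx (g v) = X.PiF g (sz v) (idx v) := by
  have hb : blk v = blk (mkv (sz v) (idx v) 0) := by rw [blk_mkv, pair_sz_idx]
  have := X.blk_g_eq g hb hv (X.real_mkv0 (idx v) hv.2.2 hv.1)
  exact idx_eq_of_blk_eq this

lemma PiFinv (g : CG X.S ≃g CG X.S) {n : ℕ} (hn : 2 ≤ n) (hnS : n ∈ X.S) (i : ℕ) :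
    X.PiF g.symm n (X.PiF g n i) = i := by
  have h0 : Real2 X.S (mkv n i 0) := X.real_mkv0 i hn hnS
  have h1 : Real2 X.S (g (mkv n i 0)) := (X.real_g g _).mpr h0
  have h2 : Real2 X.S (mkv n (X.PiF g n i) 0) := X.real_mkv0 _ hn hnS
  have hsz : sz (g (mkv n i 0)) = n := by
    have := X.sz_g g h0
    rwa [sz_mkv] at this
  have hb : blk (mkv n (X.PiF g n i) 0) = blk (g (mkv n i 0)) := by
    rw [blk_mkv]
    conv_rhs => rw [← pair_sz_idx (g (mkv n i 0))]
    rw [hsz]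
    rfl
  have h3 := X.blk_g_eq g.symm hb h2 h1
  have h4 : g.symm (g (mkv n i 0)) = mkv n i 0 := g.symm_apply_apply _
  rw [h4] at h3
  have := idx_eq_of_blk_eq h3
  rw [idx_mkv] at this
  exact this

def gNR (g : CG X.S ≃g CG X.S) : ↥X.NRset ≃ ↥X.NRset :=
  Equiv.subtypeEquiv g.toEquiv (fun v => by
    simp only [NRset, Set.mem_setOf_eq]
    exact not_congr (X.real_g g v).symm)

def PiL (g : CG X.S ≃g CG X.S) (n : ℕ) : ℕ ≃ ℕ :=
  if h : 2 ≤ n ∧ n ∈ X.S then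
    { toFun := X.PiF g n
      invFun := X.PiF g.symm n
      left_inv := fun i => X.PiFinv g h.1 h.2 i
      right_inv := fun i => X.PiFinv g.symm h.1 h.2 i }
  else X.eNR.symm.trans ((X.gNR g).trans X.eNR)

lemma PiL_real (g : CG X.S ≃g CG X.S) {n : ℕ} (hn : 2 ≤ n) (hnS : n ∈ X.S) (i : ℕ) :
    X.PiL g n i = X.PiF g n i := by
  rw [PiL, dif_pos ⟨hn, hnS⟩]
  rfl

lemma PiL_one (g : CG X.S ≃g CG X.S) (w : ↥X.NRset) :
    X.PiL g 1 (X.eNR w) = X.eNR (X.gNR g w) := by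
  rw [PiL, dif_neg (by rintro ⟨h, -⟩; omega)]
  simp only [Equiv.trans_apply, Equiv.symm_apply_apply]

/-! ### The transferred automorphism -/

def UL (n : ℕ) : Prop := n = 1 ∨ (2 ≤ n ∧ n ∈ X.S)

def IsHost (B : ℕ) : Prop := ∃ n i, X.UL n ∧ B = X.hostBlk n i

def betaF (T : ℕ → ℕ → ℕ) (B : ℕ) : ℕ :=
  if h : X.IsHost B then X.hostBlk h.choose (T h.choose h.choose_spec.choose) else B

lemma betaF_host' (T : ℕ → ℕ → ℕ) {n i B : ℕ} (h : X.UL n) (hB : B = X.hostBlk n i) :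
    X.betaF T B = X.hostBlk n (T n i) := by
  have hh : X.IsHost B := ⟨n, i, h, hB⟩
  rw [betaF, dif_pos hh]
  obtain ⟨hn, hi⟩ := X.hostBlk_inj ((hh.choose_spec.choose_spec.2).symm.trans hB)
  subst hn
  subst hi
  rfl

lemma betaF_host (T : ℕ → ℕ → ℕ) {n i : ℕ} (h : X.UL n) :
    X.betaF T (X.hostBlk n i) = X.hostBlk n (T n i) :=
  X.betaF_host' T h rfl

lemma betaF_nonhost (T : ℕ → ℕ → ℕ) {B : ℕ} (h : ¬ X.IsHost B) :
    X.betaF T B = B := dif_neg h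

def betaE (g : CG X.S ≃g CG X.S) : ℕ ≃ ℕ where
  toFun := X.betaF (fun n i => X.PiL g n i)
  invFun := X.betaF (fun n i => (X.PiL g n).symm i)
  left_inv := by
    intro B
    by_cases h : X.IsHost B
    · obtain ⟨n, i, hUL, rfl⟩ := h
      rw [X.betaF_host _ hUL, X.betaF_host _ hUL, Equiv.symm_apply_apply]
    · rw [X.betaF_nonhost _ h, X.betaF_nonhost _ h]
  right_inv := by
    intro B
    by_cases h : X.IsHost B
    · obtain ⟨n, i, hUL, rfl⟩ := h
      rw [X.betaF_host _ hUL, X.betaF_host _ hUL, Equiv.apply_symm_apply]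
    · rw [X.betaF_nonhost _ h, X.betaF_nonhost _ h]

lemma betaE_coe (g : CG X.S ≃g CG X.S) :
    ⇑(X.betaE g) = X.betaF (fun n i => X.PiL g n i) := rfl

lemma betaE_host (g : CG X.S ≃g CG X.S) {n i : ℕ} (h : X.UL n) :
    X.betaE g (X.hostBlk n i) = X.hostBlk n (X.PiL g n i) := by
  rw [betaE_coe]
  exact X.betaF_host _ h

lemma betaE_fst (g : CG X.S ≃g CG X.S) (B : ℕ) :
    (X.betaE g B).unpair.1 = B.unpair.1 := by
  rw [betaE_coe]
  by_cases h : X.IsHost B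
  · obtain ⟨n, i, hUL, rfl⟩ := h
    rw [X.betaF_host _ hUL]
    simp [hostBlk]
  · rw [X.betaF_nonhost _ h]

def rhoEmb (g : CG X.S ≃g CG X.S) (n i : ℕ) : Fin n ↪ Fin n :=
  if h : 2 ≤ n ∧ n ∈ X.S then
    { toFun := fun p => ⟨pos (g (mkv n i p)), by
        have hr : Real2 X.S (mkv n i p) :=
          ⟨by simpa using h.2, by simpa using p.2, by simpa using h.1⟩
        have := X.pos_g_lt g hr
        rwa [sz_mkv] at this⟩
      inj' := by
        intro p q hpq
        have hrp : Real2 X.S (mkv n i ↑p) :=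
          ⟨by simpa using h.2, by simpa using p.2, by simpa using h.1⟩
        have hrq : Real2 X.S (mkv n i ↑q) :=
          ⟨by simpa using h.2, by simpa using q.2, by simpa using h.1⟩
        have hblk : blk (g (mkv n i ↑p)) = blk (g (mkv n i ↑q)) :=
          X.blk_g_eq g (by simp) hrp hrq
        have e1 : sz (g (mkv n i ↑p)) = sz (g (mkv n i ↑q)) := sz_eq_of_blk_eq hblk
        have e2 : idx (g (mkv n i ↑p)) = idx (g (mkv n i ↑q)) := idx_eq_of_blk_eq hblk
        have e3 : pos (g (mkv n i ↑p)) = pos (g (mkv n i ↑q)) := congrArg Fin.val hpq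
        have he : g (mkv n i ↑p) = g (mkv n i ↑q) := by
          rw [← mkv_eta (g (mkv n i ↑p)), ← mkv_eta (g (mkv n i ↑q)), e1, e2, e3]
        have := g.injective he
        exact Fin.ext (mkv_left_inj this).2.2 }
  else Function.Embedding.refl _

lemma rhoEmb_real (g : CG X.S ≃g CG X.S) {n : ℕ} (hn : 2 ≤ n) (hnS : n ∈ X.S)
    (i : ℕ) (p : Fin n) :
    (X.rhoEmb g n i p : ℕ) = pos (g (mkv n i ↑p)) := by
  rw [rhoEmb, dif_pos ⟨hn, hnS⟩]
  rfl

def pi0 (g : CG X.S ≃g CG X.S) (n i : ℕ) : Equiv.Perm (Fin (X.M n)) :=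
  (exPerm (X.uEmb n i) ((X.rhoEmb g n i).trans (X.uEmb n (X.PiL g n i)))).choose

lemma pi0_spec (g : CG X.S ≃g CG X.S) (n i : ℕ) (p : Fin n) :
    X.pi0 g n i (X.uEmb n i p) = X.uEmb n (X.PiL g n i) (X.rhoEmb g n i p) :=
  (exPerm (X.uEmb n i) ((X.rhoEmb g n i).trans (X.uEmb n (X.PiL g n i)))).choose_spec p

def psiF (g : CG X.S ≃g CG X.S) (B : ℕ) : ℕ ≃ ℕ :=
  if h : X.IsHost B then
    (X.pi0 g h.choose h.choose_spec.choose).extendDomain Fin.equivSubtype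
  else Equiv.refl ℕ

lemma psiF_host' (g : CG X.S ≃g CG X.S) {n i B : ℕ} (h : X.UL n)
    (hB : B = X.hostBlk n i) :
    X.psiF g B = (X.pi0 g n i).extendDomain Fin.equivSubtype := by
  have hh : X.IsHost B := ⟨n, i, h, hB⟩
  rw [psiF, dif_pos hh]
  obtain ⟨hn, hi⟩ := X.hostBlk_inj ((hh.choose_spec.choose_spec.2).symm.trans hB)
  subst hn
  subst hi
  rfl

lemma psiF_host (g : CG X.S ≃g CG X.S) {n i : ℕ} (h : X.UL n) :
    X.psiF g (X.hostBlk n i) = (X.pi0 g n i).extendDomain Fin.equivSubtype :=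
  X.psiF_host' g h rfl

lemma psiF_lt_iff (g : CG X.S ≃g CG X.S) (B q : ℕ) :
    X.psiF g B q < B.unpair.1 ↔ q < B.unpair.1 := by
  by_cases h : X.IsHost B
  · obtain ⟨n, i, hUL, rfl⟩ := h
    rw [X.psiF_host g hUL]
    have hfst : (X.hostBlk n i).unpair.1 = X.M n := by simp [hostBlk]
    rw [hfst]
    by_cases hq : q < X.M n
    · simp only [hq, iff_true]
      rw [Equiv.Perm.extendDomain_apply_subtype _ Fin.equivSubtype hq]
      exact (Fin.equivSubtype ((X.pi0 g n i) (Fin.equivSubtype.symm ⟨q, hq⟩))).2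
    · rw [Equiv.Perm.extendDomain_apply_not_subtype _ Fin.equivSubtype hq]
  · rw [psiF, dif_neg h]
    rfl

def gP (g : CG X.S ≃g CG X.S) : ℕ ≃ ℕ :=
  Nat.pairEquiv.symm.trans
    ((Equiv.prodShear (X.betaE g) (fun B => X.psiF g B)).trans Nat.pairEquiv)

lemma gP_apply (g : CG X.S ≃g CG X.S) (v : ℕ) :
    X.gP g v = Nat.pair (X.betaE g (blk v)) (X.psiF g (blk v) (pos v)) := by
  simp [gP, Equiv.prodShear, Nat.pairEquiv, blk, pos]
  rfl

lemma blk_gP (g : CG X.S ≃g CG X.S) (v : ℕ) :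
    blk (X.gP g v) = X.betaE g (blk v) := by
  rw [gP_apply, blk, Nat.unpair_pair]

lemma pos_gP (g : CG X.S ≃g CG X.S) (v : ℕ) :
    pos (X.gP g v) = X.psiF g (blk v) (pos v) := by
  rw [gP_apply, pos, Nat.unpair_pair]

lemma sz_gP (g : CG X.S ≃g CG X.S) (v : ℕ) : sz (X.gP g v) = sz v := by
  rw [sz, blk_gP, betaE_fst]
  rfl

lemma real_gP (g : CG X.S ≃g CG X.S) (v : ℕ) :
    Real2 X.S (X.gP g v) ↔ Real2 X.S v := by
  unfold Real2
  rw [X.sz_gP g v, X.pos_gP g v]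
  have h := X.psiF_lt_iff g (blk v) (pos v)
  exact and_congr Iff.rfl (and_congr h Iff.rfl)

def gIso (g : CG X.S ≃g CG X.S) : CG X.S ≃g CG X.S where
  toEquiv := X.gP g
  map_rel_iff' := by
    intro u v
    show (CG X.S).Adj (X.gP g u) (X.gP g v) ↔ (CG X.S).Adj u v
    rw [CG_adj, CG_adj]
    apply and_congr
    · exact not_congr (Equiv.apply_eq_iff_eq _)
    · apply and_congr
      · rw [X.blk_gP g u, X.blk_gP g v]
        exact Equiv.apply_eq_iff_eq _
      · exact and_congr (X.real_gP g u) (X.real_gP g v)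

end Ctx
end
end SymIndivProof
namespace SymIndivProof
noncomputable section
namespace Ctx
open Classical

variable (X : Ctx)

theorem gP_emb (g : CG X.S ≃g CG X.S) (v : ℕ) :
    X.gP g (X.emb v) = X.emb (g v) := by
  by_cases hv : Real2 X.S v
  · -- component case
    have h2 : 2 ≤ sz v := hv.2.2
    have hS' : sz v ∈ X.S := hv.1
    have hpn : pos v < sz v := hv.2.1
    have hUL : X.UL (sz v) := Or.inr ⟨h2, hS'⟩
    have hL : X.gP g (X.emb v) =
        Nat.pair (X.betaE g (X.hostBlk (sz v) (idx v)))
          (X.psiF g (X.hostBlk (sz v) (idx v)) (X.sel (sz v) (idx v) (pos v))) := by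
      rw [X.gP_apply, X.blk_emb_real hv, X.emb_real hv, pos_mkv]
    have hbeta : X.betaE g (X.hostBlk (sz v) (idx v)) =
        X.hostBlk (sz v) (X.PiL g (sz v) (idx v)) := X.betaE_host g hUL
    have hpsi : X.psiF g (X.hostBlk (sz v) (idx v)) (X.sel (sz v) (idx v) (pos v)) =
        X.sel (sz v) (X.PiL g (sz v) (idx v)) (pos (g v)) := by
      rw [X.psiF_host g hUL]
      have hlt : X.sel (sz v) (idx v) (pos v) < X.M (sz v) :=
        X.sel_lt (X.card_pos_real hv)
      rw [Equiv.Perm.extendDomain_apply_subtype _ Fin.equivSubtype hlt]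
      have hfin : (Fin.equivSubtype.symm ⟨X.sel (sz v) (idx v) (pos v), hlt⟩ :
          Fin (X.M (sz v))) = X.uEmb (sz v) (idx v) ⟨pos v, hpn⟩ := by
        apply Fin.ext
        rfl
      rw [hfin, X.pi0_spec g (sz v) (idx v) ⟨pos v, hpn⟩]
      have hrho : (X.rhoEmb g (sz v) (idx v) ⟨pos v, hpn⟩ : Fin (sz v)) =
          ⟨pos (g v), X.pos_g_lt g hv⟩ := by
        apply Fin.ext
        rw [X.rhoEmb_real g h2 hS' (idx v) ⟨pos v, hpn⟩]
        show pos (g (mkv (sz v) (idx v) (pos v))) = pos (g v)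
        rw [mkv_eta]
      rw [hrho]
      rfl
    have hgv : Real2 X.S (g v) := (X.real_g g v).mpr hv
    have hsz : sz (g v) = sz v := X.sz_g g hv
    have hidx : idx (g v) = X.PiL g (sz v) (idx v) := by
      rw [X.idx_g g hv, X.PiL_real g h2 hS' (idx v)]
    rw [hL, hbeta, hpsi, X.emb_real hgv, hsz, hidx]
    rfl
  · -- isolated case
    have hUL : X.UL 1 := Or.inl rfl
    have hgv : ¬ Real2 X.S (g v) := fun h => hv ((X.real_g g v).mp h)
    have hL : X.gP g (X.emb v) =
        Nat.pair (X.betaE g (X.hostBlk 1 (X.eNR ⟨v, hv⟩)))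
          (X.psiF g (X.hostBlk 1 (X.eNR ⟨v, hv⟩)) (X.sel 1 (X.eNR ⟨v, hv⟩) 0)) := by
      rw [X.gP_apply, X.blk_emb_notreal hv, X.emb_notreal hv, pos_mkv]
    have hbeta : X.betaE g (X.hostBlk 1 (X.eNR ⟨v, hv⟩)) =
        X.hostBlk 1 (X.PiL g 1 (X.eNR ⟨v, hv⟩)) := X.betaE_host g hUL
    have hPiL : X.PiL g 1 (X.eNR ⟨v, hv⟩) = X.eNR ⟨g v, hgv⟩ := by
      rw [X.PiL_one g ⟨v, hv⟩]
      congr 1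
    have hpsi : X.psiF g (X.hostBlk 1 (X.eNR ⟨v, hv⟩)) (X.sel 1 (X.eNR ⟨v, hv⟩) 0) =
        X.sel 1 (X.PiL g 1 (X.eNR ⟨v, hv⟩)) 0 := by
      rw [X.psiF_host g hUL]
      have hlt : X.sel 1 (X.eNR ⟨v, hv⟩) 0 < X.M 1 := X.sel_lt (X.card_pos_one _)
      rw [Equiv.Perm.extendDomain_apply_subtype _ Fin.equivSubtype hlt]
      have hfin : (Fin.equivSubtype.symm ⟨X.sel 1 (X.eNR ⟨v, hv⟩) 0, hlt⟩ :
          Fin (X.M 1)) = X.uEmb 1 (X.eNR ⟨v, hv⟩) ⟨0, one_pos⟩ := by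
        apply Fin.ext
        rfl
      rw [hfin, X.pi0_spec g 1 (X.eNR ⟨v, hv⟩) ⟨0, one_pos⟩]
      have hrho : (X.rhoEmb g 1 (X.eNR ⟨v, hv⟩) ⟨0, one_pos⟩ : Fin 1) =
          ⟨0, one_pos⟩ := Subsingleton.elim _ _
      rw [hrho]
      rfl
    rw [hL, hbeta, hpsi, hPiL, X.emb_notreal hgv]
    rfl

end Ctx

theorem main (S : Set ℕ) (hS : ∀ m, m % 2 = 1 → m ∈ S) : SymIndivGraph (CG S) := by
  intro c
  obtain ⟨b, M, hMmono, hM⟩ := exists_bM c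
  let X : Ctx := ⟨S, hS, c, b, M, hMmono, fun n => (hM n).1, fun n => (hM n).2.1,
    fun n => (hM n).2.2⟩
  refine ⟨X.eEmbg, ?_, ?_⟩
  · intro g
    exact ⟨X.gIso g, fun v => X.gP_emb g v⟩
  · intro x y
    show X.c (X.emb x) = X.c (X.emb y)
    rw [X.emb_color, X.emb_color]

end
end SymIndivProof

theorem exists_injective_map_to_symIndiv_graphs :
    ∃ F : SimpleGraph ℕ → SimpleGraph ℕ,
      (∀ G : SimpleGraph ℕ, SymIndivGraph (F G)) ∧
      ∀ G H : SimpleGraph ℕ, Nonempty (F G ≃g F H) → Nonempty (G ≃g H) := by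
  refine ⟨fun G => SymIndivProof.CG (SymIndivProof.SS G), ?_, ?_⟩
  · intro G
    exact SymIndivProof.main _ (fun m hm => SymIndivProof.odd_mem_SS hm)
  · intro G H h
    exact SymIndivProof.part2 h
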